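/- Let b ≥ 0, (a_n) a nonincreasing sequence in [0,b], (δ_n) a sequence of non-negative reals with a_{n+1} ≤ a_n + δ_n for all n, and γ: (0,∞) → ℕ such that for all ε > 0 and m ≥ γ(ε), the sum of δ_i for i ∈ [γ(ε), m) is ≤ ε. Then for every ε > 0 and g: ℕ → ℕ, there exists N with γ(ε/4) ≤ N ≤ (g^M)~^(⌈2b/ε⌉)(γ(ε/4)) such that for all n, m ∈ [N, N + g(N)], |a_n - a_m| ≤ ε. -/

import Mathlib

/-- Full quantitative (metastable) version of the Tan–Xu lemma. -/
theorem stmt_9 (b : ℝ) (hb : 0 ≤ b) (a : ℕ → ℝ)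
    (hmono : ∀ n, a (n+1) ≤ a n) (hrange : ∀ n, a n ∈ Set.Icc (0:ℝ) b)
    (δ : ℕ → ℝ) (hδ : ∀ n, 0 ≤ δ n) (hrec : ∀ n, a (n+1) ≤ a n + δ n)
    (γ : ℝ → ℕ)
    (hγ : ∀ ε : ℝ, 0 < ε → ∀ m, γ ε ≤ m → ∑ i ∈ Finset.Ico (γ ε) m, δ i ≤ ε)
    (ε : ℝ) (hε : 0 < ε) (g : ℕ → ℕ) :
    ∃ N, γ (ε/4) ≤ N ∧
      N ≤ (fun n => n + (Finset.range (n+1)).sup g)^[⌈2*b/ε⌉₊] (γ (ε/4)) ∧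
      ∀ n ∈ Set.Icc N (N + g N), ∀ m ∈ Set.Icc N (N + g N), |a n - a m| ≤ ε := by
  set F : ℕ → ℕ := fun n => n + (Finset.range (n+1)).sup g with hFdef
  set K := ⌈2*b/ε⌉₊ with hK
  set N0 := γ (ε/4) with hN0
  have hanti : Antitone a := antitone_nat_of_succ_le hmono
  have hiter : Monotone (fun k => F^[k] N0) := by
    apply monotone_nat_of_le_succ
    intro k
    rw [Function.iterate_succ_apply']
    exact Nat.le_add_right _ _
  have hwin : ∀ k, F^[k] N0 + g (F^[k] N0) ≤ F^[k+1] N0 := by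
    intro k
    rw [Function.iterate_succ_apply']
    exact Nat.add_le_add_left
      (Finset.le_sup (Finset.mem_range.2 (Nat.lt_succ_self _))) _
  -- find a good window
  have key : ∃ k ≤ K, a (F^[k] N0) - a (F^[k] N0 + g (F^[k] N0)) ≤ ε := by
    by_contra h
    push_neg at h
    have hdrop : ∀ k < K, ε < a (F^[k] N0) - a (F^[k+1] N0) := by
      intro k hk
      have h1 := h k (le_of_lt hk)
      have h2 : a (F^[k+1] N0) ≤ a (F^[k] N0 + g (F^[k] N0)) := hanti (hwin k)
      linarith
    have hKpos : 0 < K := by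
      rcases Nat.eq_zero_or_pos K with h0 | h0
      · -- K = 0 : then h 0 gives ε < a N0 - a (N0 + g N0) ≤ 0 impossible? not nec.
        exfalso
        -- a (F^[0] N0) - a (...) ≤ b - 0 = b, and K = 0 means 2b/ε < 1 so b < ε/... 
        have hb2 : 2*b/ε < 1 := by
          by_contra hc
          push_neg at hc
          have := Nat.one_le_ceil_iff.2 (by linarith : (0:ℝ) < 2*b/ε)
          omega
        have hble : 2*b < ε := by
          rw [div_lt_one hε] at hb2; linarith
        have hu := (hrange (F^[0] N0)).2
        have hl := (hrange (F^[0] N0 + g (F^[0] N0))).1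
        have h00 := h 0 (Nat.zero_le _)
        linarith
      · exact h0
    -- telescoping sum
    have hsum : a (F^[0] N0) - a (F^[K] N0)
        = ∑ k ∈ Finset.range K, (a (F^[k] N0) - a (F^[k+1] N0)) := by
      rw [Finset.sum_range_sub' (fun k => a (F^[k] N0))]
    have hbig : (K : ℝ) * ε < a (F^[0] N0) - a (F^[K] N0) := by
      rw [hsum]
      calc (K : ℝ) * ε = ∑ _k ∈ Finset.range K, ε := by
            rw [Finset.sum_const, Finset.card_range, nsmul_eq_mul]
        _ < _ := by
            apply Finset.sum_lt_sum_of_nonempty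
            · exact Finset.nonempty_range_iff.2 (by omega)
            · intro k hk
              exact hdrop k (Finset.mem_range.1 hk)
    have h2b : 2*b ≤ (K : ℝ) * ε := by
      have := Nat.le_ceil (2*b/ε)
      calc 2*b = (2*b/ε) * ε := by field_simp
        _ ≤ (K : ℝ) * ε := by
            apply mul_le_mul_of_nonneg_right this (le_of_lt hε)
    have hu := (hrange (F^[0] N0)).2
    have hl := (hrange (F^[K] N0)).1
    have hbpos : 0 < b := by
      by_contra hc
      push_neg at hc
      have hb0 : b = 0 := le_antisymm hc hb
      rw [hb0] at h2b
      have : (K:ℝ) * ε > 0 := by positivity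
      -- fine, 0 ≤ Kε; need contradiction from hbig: Kε < a - a ≤ b = 0
      linarith [hbig, hu, hl, hb0 ▸ hu]
    linarith
  obtain ⟨k, hkK, hkdrop⟩ := key
  refine ⟨F^[k] N0, ?_, ?_, ?_⟩
  · simpa using hiter (Nat.zero_le k)
  · exact hiter hkK
  · intro n hn m hm
    set N := F^[k] N0
    have h1 : a n ≤ a N := hanti hn.1
    have h2 : a (N + g N) ≤ a n := hanti hn.2
    have h3 : a m ≤ a N := hanti hm.1
    have h4 : a (N + g N) ≤ a m := hanti hm.2
    rw [abs_sub_le_iff]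
    constructor <;> linarith
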